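/- arXiv:2602.14741 — 4 statements merged into one kernel-verified Lean document; each statement's English description precedes it below -/
import Mathlib

section
/- For the affine attachment function f_δ(k)=k+δ with δ>0 and any λ>1, the series m_δ(λ) = ∑_{n≥1} ∏_{j=0}^{n-1} (j+δ)/(j+δ+λ) converges and equals δ/(λ−1). -/
open Finset Filter Topology

theorem affine_laplace_transform (δ lam : ℝ) (hδ : 0 < δ) (hlam : 1 < lam) :
    HasSum (fun n : ℕ => ∏ j ∈ Finset.range (n + 1), ((j : ℝ) + δ) / ((j : ℝ) + δ + lam))
      (δ / (lam - 1)) := by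
  have hl1 : (0:ℝ) < lam - 1 := by linarith
  set f : ℕ → ℝ := fun n => ∏ j ∈ Finset.range (n + 1), ((j : ℝ) + δ) / ((j : ℝ) + δ + lam)
    with hfdef
  set P : ℕ → ℝ := fun n => ∏ j ∈ Finset.range n, ((j : ℝ) + δ) / ((j : ℝ) + δ + lam)
    with hPdef
  have hnum : ∀ n : ℕ, (0:ℝ) < (n:ℝ) + δ := fun n => by
    have : (0:ℝ) ≤ (n:ℝ) := Nat.cast_nonneg n
    linarith
  have hden : ∀ n : ℕ, (0:ℝ) < (n:ℝ) + δ + lam := fun n => by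
    have : (0:ℝ) ≤ (n:ℝ) := Nat.cast_nonneg n
    linarith
  have hPpos : ∀ n : ℕ, 0 < P n := by
    intro n
    exact Finset.prod_pos fun j _ => div_pos (hnum j) (hden j)
  have hstep : ∀ n : ℕ, P (n+1) = P n * (((n:ℝ)+δ) / ((n:ℝ)+δ+lam)) :=
    fun n => Finset.prod_range_succ _ n
  have hfP : ∀ n, f n = P (n+1) := fun n => rfl
  set c : ℕ → ℝ := fun n => (((n:ℝ)+δ)/(lam-1)) * P n with hcdef
  have htel : ∀ n, f n = c n - c (n+1) := by
    intro n
    have h1 : ((n:ℝ)+δ+lam) ≠ 0 := ne_of_gt (hden n)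
    have h2 : (lam - 1) ≠ 0 := ne_of_gt hl1
    rw [hfP, hstep]
    simp only [hcdef, hstep]
    push_cast
    field_simp
    ring
  have hsum_range : ∀ N, ∑ i ∈ Finset.range N, f i = c 0 - c N := by
    intro N
    calc ∑ i ∈ Finset.range N, f i = ∑ i ∈ Finset.range N, (c i - c (i+1)) :=
          Finset.sum_congr rfl fun i _ => htel i
      _ = c 0 - c N := Finset.sum_range_sub' c N
  have hc0 : c 0 = δ / (lam - 1) := by
    simp [hcdef, hPdef]
  have hfnonneg : ∀ n, 0 ≤ f n := fun n => le_of_lt (hPpos (n+1))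
  have hcnonneg : ∀ n, 0 ≤ c n := fun n =>
    le_of_lt (mul_pos (div_pos (hnum n) hl1) (hPpos n))
  have hsummable : Summable f := by
    apply summable_of_sum_range_le hfnonneg
    intro N
    rw [hsum_range]
    linarith [hcnonneg N]
  have hanti : Antitone c := antitone_nat_of_succ_le fun n => by
    have h1 := htel n
    have h2 := hfnonneg n
    linarith
  have hbdd : BddBelow (Set.range c) := ⟨0, fun x ⟨n, hn⟩ => hn ▸ hcnonneg n⟩
  have hLtendsto : Tendsto c atTop (𝓝 (⨅ n, c n)) := tendsto_atTop_ciInf hanti hbdd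
  set L := ⨅ n, c n with hLdef
  have hL0 : 0 ≤ L := le_ciInf hcnonneg
  have hLle : ∀ n, L ≤ c n := fun n => ciInf_le hbdd n
  have hfeq : ∀ n, f n = c (n+1) * (lam-1) / ((n:ℝ)+1+δ) := by
    intro n
    have h3 : ((n:ℝ)+1+δ) ≠ 0 := by
      have := hnum (n+1); push_cast at this; intro h; rw [h] at this; exact lt_irrefl 0 this
    rw [hfP]
    simp only [hcdef]
    push_cast
    field_simp
  have hLzero : L = 0 := by
    by_contra hne
    have hLpos : 0 < L := lt_of_le_of_ne hL0 (Ne.symm hne)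
    have hK : (0:ℝ) < L * (lam - 1) := mul_pos hLpos hl1
    have hle : ∀ n : ℕ, 1 / (n:ℝ) ≤ ((2+δ)/(L*(lam-1))) * f n := by
      intro n
      rcases Nat.eq_zero_or_pos n with h0 | h1
      · subst h0
        simp only [Nat.cast_zero, div_zero]
        have := hfnonneg 0
        positivity
      · have hn1 : (1:ℝ) ≤ (n:ℝ) := by exact_mod_cast h1
        have hd : (0:ℝ) < (n:ℝ)+1+δ := by linarith
        have hfge : L*(lam-1)/((n:ℝ)+1+δ) ≤ f n := by
          rw [hfeq n]
          gcongr
          exact hLle (n+1)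
        have h2 : 1 / (n:ℝ) ≤ (2+δ)/((n:ℝ)+1+δ) := by
          rw [div_le_div_iff₀ (by linarith) hd]
          nlinarith
        calc 1 / (n:ℝ) ≤ (2+δ)/((n:ℝ)+1+δ) := h2
          _ = ((2+δ)/(L*(lam-1))) * (L*(lam-1)/((n:ℝ)+1+δ)) := by
              field_simp
          _ ≤ ((2+δ)/(L*(lam-1))) * f n := by
              gcongr
    have hsum1 : Summable (fun n : ℕ => 1 / (n:ℝ)) := by
      apply Summable.of_nonneg_of_le (fun n => by positivity) hle
      exact hsummable.mul_left _
    exact Real.not_summable_one_div_natCast hsum1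
  rw [hsummable.hasSum_iff_tendsto_nat]
  have : Tendsto (fun N => c 0 - c N) atTop (𝓝 (c 0 - L)) :=
    tendsto_const_nhds.sub hLtendsto
  rw [hLzero, sub_zero] at this
  rw [← hc0]
  exact this.congr fun N => (hsum_range N).symm
end

section
/- Let δ>0 and consider J(λ) = log((λ−1)/δ)/λ on (δ+1, ∞). Then J attains its supremum at the unique interior point λ* = 1 + 1/W(1/(δe)), and the supremum value is κ_δ = W(1/(δe)), where W is the principal branch of the Lambert W function. -/
/-- `w` plays the role of `W(1/(δe))`, the principal Lambert `W` value at `1/(δe) > 0`: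
it is the unique positive solution of `w * exp w = 1/(δ * e)`. -/
theorem affine_height_variational (δ : ℝ) (hδ : 0 < δ) (w : ℝ) (hw : 0 < w)
    (hW : w * Real.exp w = 1 / (δ * Real.exp 1)) :
    δ + 1 < 1 + 1 / w ∧
    Real.log (((1 + 1 / w) - 1) / δ) / (1 + 1 / w) = w ∧
    (∀ lam : ℝ, δ + 1 < lam → Real.log ((lam - 1) / δ) / lam ≤ w) ∧
    (∀ lam : ℝ, δ + 1 < lam → Real.log ((lam - 1) / δ) / lam = w → lam = 1 + 1 / w) := by
  have he : (0:ℝ) < Real.exp 1 := Real.exp_pos 1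
  have hδe : 0 < δ * Real.exp 1 := by positivity
  have key : w * Real.exp w * (δ * Real.exp 1) = 1 := by
    rw [hW]; field_simp
  have hlog : Real.log w + w + Real.log δ + 1 = 0 := by
    have h := congrArg Real.log key
    rw [Real.log_mul (by positivity) (by positivity),
        Real.log_mul (by positivity) (by positivity),
        Real.log_mul (by positivity) (by positivity),
        Real.log_exp, Real.log_exp, Real.log_one] at h
    linarith
  have hδw : δ * w < 1 := by
    have h1 : Real.log (δ * w) < 0 := by
      rw [Real.log_mul (by positivity) (by positivity)]; linarith [hw]
    exact (Real.log_neg_iff (by positivity)).mp h1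
  have hδlt : δ < 1 / w := by
    rw [lt_div_iff₀ hw]; nlinarith
  have part1 : δ + 1 < 1 + 1 / w := by linarith
  have hloga : Real.log (1 / (w * δ)) = w + 1 := by
    rw [one_div, Real.log_inv, Real.log_mul (by positivity) (by positivity)]
    linarith
  have part2 : Real.log (((1 + 1 / w) - 1) / δ) / (1 + 1 / w) = w := by
    have h1 : ((1 + 1 / w) - 1) / δ = 1 / (w * δ) := by field_simp; ring
    rw [h1, hloga]
    field_simp
  -- key decomposition for general lam
  have hdecomp : ∀ lam : ℝ, δ + 1 < lam →
      Real.log ((lam - 1) / δ) - w * lam = Real.log ((lam - 1) * w) - ((lam - 1) * w - 1) := by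
    intro lam hlam
    have h1 : 0 < lam - 1 := by linarith
    rw [Real.log_div (by positivity) (by positivity),
        Real.log_mul (by positivity) (by positivity)]
    linarith
  have part3 : ∀ lam : ℝ, δ + 1 < lam → Real.log ((lam - 1) / δ) / lam ≤ w := by
    intro lam hlam
    have hlam0 : 0 < lam := by linarith
    have h1 : 0 < lam - 1 := by linarith
    have h2 := Real.log_le_sub_one_of_pos (x := (lam - 1) * w) (by positivity)
    have h3 := hdecomp lam hlam
    rw [div_le_iff₀ hlam0]
    linarith
  refine ⟨part1, part2, part3, ?_⟩
  intro lam hlam heq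
  have hlam0 : 0 < lam := by linarith
  have h1 : 0 < lam - 1 := by linarith
  have h3 := hdecomp lam hlam
  have heq' : Real.log ((lam - 1) / δ) = w * lam := by
    field_simp at heq; linarith
  have hone : (lam - 1) * w = 1 := by
    by_contra hne
    have := Real.log_lt_sub_one_of_pos (x := (lam - 1) * w) (by positivity) hne
    linarith
  have : lam - 1 = 1 / w := by
    field_simp
    linarith
  linarith [this, (by field_simp; ring : (1:ℝ) + 1 / w - 1 = 1 / w)]
end

section
/- The map δ ↦ 1/((δ+1)·W(1/(δe))) is strictly increasing on (0,∞), where W is the principal branch of the Lambert W function. -/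
/-- `W` is the principal branch of the Lambert W function; on the positive reals it is
characterised by `W x * exp (W x) = x` and `W x > 0`. The map
`δ ↦ 1/((δ+1) * W (1/(δ e)))` is strictly increasing on `(0,∞)`. -/
theorem affine_height_constant_strict_mono (W : ℝ → ℝ)
    (hW : ∀ x : ℝ, 0 < x → W x * Real.exp (W x) = x)
    (hWpos : ∀ x : ℝ, 0 < x → 0 < W x) :
    StrictMonoOn (fun δ : ℝ => 1 / ((δ + 1) * W (1 / (δ * Real.exp 1)))) (Set.Ioi 0) := by
  intro a ha b hb hab
  simp only [Set.mem_Ioi] at ha hb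
  have he : (0:ℝ) < Real.exp 1 := Real.exp_pos 1
  have hxa : (0:ℝ) < 1 / (a * Real.exp 1) := by positivity
  have hxb : (0:ℝ) < 1 / (b * Real.exp 1) := by positivity
  set wa := W (1 / (a * Real.exp 1)) with hwa_def
  set wb := W (1 / (b * Real.exp 1)) with hwb_def
  have hwa : wa * Real.exp wa = 1 / (a * Real.exp 1) := hW _ hxa
  have hwb : wb * Real.exp wb = 1 / (b * Real.exp 1) := hW _ hxb
  have hwap : 0 < wa := hWpos _ hxa
  have hwbp : 0 < wb := hWpos _ hxb
  -- 1/(b e) < 1/(a e)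
  have hxlt : 1 / (b * Real.exp 1) < 1 / (a * Real.exp 1) := by
    apply one_div_lt_one_div_of_lt (by positivity)
    exact mul_lt_mul_of_pos_right hab he
  -- wb < wa
  have hwlt : wb < wa := by
    by_contra h
    push_neg at h
    have h1 : wa * Real.exp wa ≤ wb * Real.exp wb :=
      mul_le_mul h (Real.exp_le_exp.mpr h) (Real.exp_pos _).le hwbp.le
    rw [hwa, hwb] at h1
    linarith
  -- a * wa = exp (-wa - 1), via a * e * (wa * exp wa) = 1
  have haw : a * wa = Real.exp (-wa - 1) := by
    have h1 : a * Real.exp 1 * (wa * Real.exp wa) = 1 := by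
      field_simp at hwa ⊢
      linarith [hwa]
    have h2 : a * wa * Real.exp (wa + 1) = 1 := by
      rw [Real.exp_add]; ring_nf; ring_nf at h1; linarith
    have h3 : Real.exp (-wa - 1) * Real.exp (wa + 1) = 1 := by
      rw [← Real.exp_add]; norm_num
    have hep : (0:ℝ) < Real.exp (wa + 1) := Real.exp_pos _
    nlinarith [h2, h3]
  have hbw : b * wb = Real.exp (-wb - 1) := by
    have h1 : b * Real.exp 1 * (wb * Real.exp wb) = 1 := by
      field_simp at hwb ⊢
      linarith [hwb]
    have h2 : b * wb * Real.exp (wb + 1) = 1 := by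
      rw [Real.exp_add]; ring_nf; ring_nf at h1; linarith
    have h3 : Real.exp (-wb - 1) * Real.exp (wb + 1) = 1 := by
      rw [← Real.exp_add]; norm_num
    have hep : (0:ℝ) < Real.exp (wb + 1) := Real.exp_pos _
    nlinarith [h2, h3]
  -- key inequality: exp(-wb-1) + wb < exp(-wa-1) + wa
  have hkey : Real.exp (-wb - 1) + wb < Real.exp (-wa - 1) + wa := by
    have h1 : (wb - wa) + 1 ≤ Real.exp (wb - wa) := Real.add_one_le_exp _
    have h2 : Real.exp (-wb - 1) < 1 := Real.exp_lt_one_iff.mpr (by linarith)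
    have h3 : Real.exp (-wa - 1) = Real.exp (-wb - 1) * Real.exp (wb - wa) := by
      rw [← Real.exp_add]; ring_nf
    have h4 : 0 < Real.exp (-wb - 1) := Real.exp_pos _
    nlinarith [h1, h2, h3, h4]
  have hga : (a + 1) * wa = Real.exp (-wa - 1) + wa := by
    rw [add_mul, one_mul, haw]
  have hgb : (b + 1) * wb = Real.exp (-wb - 1) + wb := by
    rw [add_mul, one_mul, hbw]
  have hgbpos : 0 < (b + 1) * wb := by positivity
  have hglt : (b + 1) * wb < (a + 1) * wa := by rw [hga, hgb]; exact hkey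
  simp only
  exact one_div_lt_one_div_of_lt hgbpos hglt
end

section
/- Let N be an ℕ-valued random variable with N≥1, c:ℕ→ℝ, S = ∑_{j=0}^{N-1} c_j, and suppose P(N>k+1)>0. Define μ_k = E[S | N>k], q_k = P(N=k+1 | N>k), and 𝓡_{k+1} = E[∑_{j=k+1}^{N-1} c_j | N>k+1]. Then μ_{k+1} − μ_k = q_k · 𝓡_{k+1}. -/
open MeasureTheory

theorem increment_identity {Ω : Type*} [MeasurableSpace Ω]
    (μ : Measure Ω) [IsProbabilityMeasure μ]
    (N : Ω → ℕ) (hN : Measurable N) (hN1 : ∀ ω, 1 ≤ N ω)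
    (c : ℕ → ℝ)
    (hS : Integrable (fun ω => ∑ j ∈ Finset.range (N ω), c j) μ)
    (k : ℕ) (hpos : 0 < (μ {ω | k + 1 < N ω}).toReal) :
    (∫ ω in {ω | k + 1 < N ω}, ∑ j ∈ Finset.range (N ω), c j ∂μ) /
        (μ {ω | k + 1 < N ω}).toReal
      - (∫ ω in {ω | k < N ω}, ∑ j ∈ Finset.range (N ω), c j ∂μ) /
          (μ {ω | k < N ω}).toReal
    = ((μ {ω | N ω = k + 1}).toReal / (μ {ω | k < N ω}).toReal) *
        ((∫ ω in {ω | k + 1 < N ω}, ∑ j ∈ Finset.Ico (k + 1) (N ω), c j ∂μ) /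
          (μ {ω | k + 1 < N ω}).toReal) := by
  set T : Ω → ℝ := fun ω => ∑ j ∈ Finset.range (N ω), c j with hTdef
  set R : Ω → ℝ := fun ω => ∑ j ∈ Finset.Ico (k + 1) (N ω), c j with hRdef
  set s : ℝ := ∑ j ∈ Finset.range (k + 1), c j with hsdef
  set A : Set Ω := {ω | k < N ω} with hAdef
  set B : Set Ω := {ω | k + 1 < N ω} with hBdef
  set C : Set Ω := {ω | N ω = k + 1} with hCdef
  have hA : MeasurableSet A := hN measurableSet_Ioi
  have hB : MeasurableSet B := hN measurableSet_Ioi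
  have hC : MeasurableSet C := hN (measurableSet_singleton _)
  have hBA : B ⊆ A := fun ω h => lt_trans (Nat.lt_succ_self k) h
  have hsplit : ∀ ω, ω ∈ A → T ω = s + R ω := by
    intro ω hω
    simp only [hTdef, hRdef, hsdef, Finset.range_eq_Ico]
    exact (Finset.sum_Ico_consecutive _ (Nat.zero_le _) hω).symm
  have hRint : IntegrableOn R A μ := by
    have h1 : IntegrableOn (fun ω => T ω - s) A μ :=
      hS.integrableOn.sub (integrableOn_const (measure_ne_top μ _))
    exact h1.congr_fun (fun ω hω => by show T ω - s = R ω; rw [hsplit ω hω]; ring) hA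
  have key : ∀ (t : Set Ω), MeasurableSet t → t ⊆ A →
      ∫ ω in t, T ω ∂μ = (μ t).toReal * s + ∫ ω in t, R ω ∂μ := by
    intro t ht hsub
    rw [setIntegral_congr_fun ht (fun ω hω => hsplit ω (hsub hω)),
      integral_add (show IntegrableOn (fun _ : Ω => s) t μ from integrableOn_const (measure_ne_top μ _))
        (hRint.mono_set hsub), setIntegral_const, smul_eq_mul, Measure.real]
  have hAeq : A = B ∪ C := by
    ext ω; simp only [hAdef, hBdef, hCdef, Set.mem_setOf_eq, Set.mem_union]; omega
  have hdisj : Disjoint B C := by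
    rw [Set.disjoint_left]
    intro ω hω hω'
    simp only [hBdef, hCdef, Set.mem_setOf_eq] at hω hω'
    omega
  have hCR : ∫ ω in C, R ω ∂μ = 0 := by
    rw [setIntegral_congr_fun hC (g := fun _ => (0 : ℝ))
      (fun ω hω => by simp only [hRdef]; rw [hω]; simp), integral_zero]
  have hAR : ∫ ω in A, R ω ∂μ = ∫ ω in B, R ω ∂μ := by
    rw [hAeq, setIntegral_union hdisj hC (hRint.mono_set (hAeq ▸ Set.subset_union_left))
      (hRint.mono_set (hAeq ▸ Set.subset_union_right)), hCR, add_zero]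
  have hmeas : (μ A).toReal = (μ B).toReal + (μ C).toReal := by
    rw [hAeq, measure_union hdisj hC, ENNReal.toReal_add (measure_ne_top μ _) (measure_ne_top μ _)]
  have hIA := key A hA (subset_refl A)
  have hIB := key B hB hBA
  rw [hIA, hIB, hAR]
  set a := (μ A).toReal
  set b := (μ B).toReal
  set cc := (μ C).toReal
  set I := ∫ ω in B, R ω ∂μ
  have ha : 0 < a := by
    have hcc : 0 ≤ cc := ENNReal.toReal_nonneg
    rw [hmeas]; linarith
  rw [hmeas]
  have hb : b ≠ 0 := ne_of_gt hpos
  have habc : b + cc ≠ 0 := by rw [← hmeas]; exact ne_of_gt ha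
  field_simp
  ring
end
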